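/- Computing the minimum running buffer size MRB(G) of a directed dependency graph G is NP-hard; in particular, if there is a polynomial-time algorithm computing an ordering φ with RB(G, φ) ≤ MRB(G) + α for a constant α, then the vertex separation number admits a polynomial-time absolute approximation within α + 1. -/
import Mathlib


/-- The set of buffered vertices when the vertices in `S` have been processed:
vertices in `S` with an out-arc to an unprocessed vertex. -/
def bufferSet {V : Type*} [Fintype V] [DecidableEq V] (arc : V → V → Prop) [DecidableRel arc]
    (S : Finset V) : Finset V :=
  S.filter (fun u => ∃ v, v ∉ S ∧ arc u v)

/-- The running buffer size of the ordering `l` on the digraph with arc relation `arc`: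
the peak buffer occupancy, accounting for the momentary extra buffer slot when the newly
processed vertex itself enters the buffer before previously buffered vertices exit. -/
def RB {V : Type*} [Fintype V] [DecidableEq V] (arc : V → V → Prop) [DecidableRel arc]
    (l : List V) : ℕ :=
  (List.range l.length).foldl
    (fun m k =>
      let Sold := (l.take k).toFinset
      let Snew := (l.take (k + 1)).toFinset
      let tc : ℕ := if Snew \ Sold ⊆ bufferSet arc Snew then 1 else 0
      max m (max (bufferSet arc Snew).card ((bufferSet arc Sold).card + tc))) 0

/-- The minimum running buffer of a digraph: minimum of `RB` over all linear orderings. -/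
noncomputable def MRB {V : Type*} [Fintype V] [DecidableEq V] (arc : V → V → Prop)
    [DecidableRel arc] : ℕ :=
  sInf {k | ∃ l : List V, l.Nodup ∧ (∀ v, v ∈ l) ∧ RB arc l = k}
/-- The vertex separation value of a linear ordering `l` for the adjacency relation `adj`. -/
def VS {V : Type*} [Fintype V] [DecidableEq V] (adj : V → V → Prop) [DecidableRel adj]
    (l : List V) : ℕ :=
  (List.range l.length).foldl
    (fun m k => max m (bufferSet adj ((l.take (k + 1)).toFinset)).card) 0

/-- The vertex separation number: minimum of `VS` over all linear orderings. -/
noncomputable def MinVS {V : Type*} [Fintype V] [DecidableEq V] (adj : V → V → Prop)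
    [DecidableRel adj] : ℕ :=
  sInf {k | ∃ l : List V, l.Nodup ∧ (∀ v, v ∈ l) ∧ VS adj l = k}



lemma foldl_max_le (f : ℕ → ℕ) (c : ℕ) :
    ∀ (L : List ℕ) (a : ℕ), a ≤ c → (∀ k ∈ L, f k ≤ c) →
      L.foldl (fun m k => max m (f k)) a ≤ c := by
  intro L
  induction L with
  | nil => intro a ha _; simpa using ha
  | cons x L ih =>
    intro a ha h
    simp only [List.foldl_cons]
    exact ih _ (max_le ha (h x (by simp))) (fun k hk => h k (by simp [hk]))

lemma start_le_foldl_max (f : ℕ → ℕ) :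
    ∀ (L : List ℕ) (a : ℕ), a ≤ L.foldl (fun m k => max m (f k)) a := by
  intro L
  induction L with
  | nil => intro a; simp
  | cons x L ih =>
    intro a
    simp only [List.foldl_cons]
    exact le_trans (le_max_left a (f x)) (ih _)

lemma mem_le_foldl_max (f : ℕ → ℕ) :
    ∀ (L : List ℕ) (a : ℕ), ∀ k ∈ L, f k ≤ L.foldl (fun m k => max m (f k)) a := by
  intro L
  induction L with
  | nil => intro a k hk; simp at hk
  | cons x L ih =>
    intro a k hk
    simp only [List.foldl_cons]
    rcases List.mem_cons.mp hk with rfl | hk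
    · exact le_trans (le_max_right a (f k)) (start_le_foldl_max f L _)
    · exact ih _ k hk


section
variable {V : Type*} [Fintype V] [DecidableEq V] (arc : V → V → Prop) [DecidableRel arc]
  (l : List V)

/-- The per-step value of `RB`. -/
def rbStep (k : ℕ) : ℕ :=
  max (bufferSet arc ((l.take (k + 1)).toFinset)).card
    ((bufferSet arc ((l.take k).toFinset)).card +
      (if (l.take (k + 1)).toFinset \ (l.take k).toFinset ⊆
          bufferSet arc ((l.take (k + 1)).toFinset) then 1 else 0))

lemma RB_eq : RB arc l =
    (List.range l.length).foldl (fun m k => max m (rbStep arc l k)) 0 := rfl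

def vsStep (k : ℕ) : ℕ := (bufferSet arc ((l.take (k + 1)).toFinset)).card

lemma VS_eq : VS arc l =
    (List.range l.length).foldl (fun m k => max m (vsStep arc l k)) 0 := rfl

lemma VS_le_RB : VS arc l ≤ RB arc l := by
  rw [VS_eq, RB_eq]
  refine foldl_max_le _ _ _ _ (Nat.zero_le _) (fun k hk => ?_)
  exact le_trans (le_max_left _ _) (mem_le_foldl_max (rbStep arc l) _ 0 k hk)

lemma RB_le_VS_succ : RB arc l ≤ VS arc l + 1 := by
  rw [RB_eq]
  refine foldl_max_le _ _ _ _ (Nat.zero_le _) (fun k hk => ?_)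
  have hvk : vsStep arc l k ≤ VS arc l := by
    rw [VS_eq]; exact mem_le_foldl_max _ _ 0 k hk
  refine max_le (le_trans hvk (Nat.le_succ _)) ?_
  have htc : (if (l.take (k + 1)).toFinset \ (l.take k).toFinset ⊆
      bufferSet arc ((l.take (k + 1)).toFinset) then 1 else 0) ≤ 1 := by
    split <;> simp
  cases k with
  | zero =>
    have h0 : (bufferSet arc ((l.take 0).toFinset)).card = 0 := by
      simp [bufferSet]
    rw [h0]
    split <;> omega
  | succ j =>
    have hj : vsStep arc l j ≤ VS arc l := by
      rw [VS_eq]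
      refine mem_le_foldl_max _ _ 0 j ?_
      simp only [List.mem_range] at hk ⊢
      omega
    calc (bufferSet arc ((l.take (j + 1)).toFinset)).card + _
        ≤ VS arc l + 1 := Nat.add_le_add hj htc

end

/-- hardness reduction. If an ordering `φ` approximates the minimum
running buffer of the bidirected dependency graph `G^ℓ` of an undirected graph `G`
within an additive constant `α` (as a polynomial-time algorithm would produce),
then the same ordering approximates the vertex separation number of `G` within `α + 1`.
Since absolute approximation of vertex separation is NP-hard, computing (or absolutely
approximating) MRB of a dependency graph is NP-hard. -/
theorem mrb_absolute_approx_gives_vs_absolute_approx {V : Type*} [Fintype V] [DecidableEq V]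
    (G : SimpleGraph V) [DecidableRel G.Adj] (α : ℕ) (l : List V)
    (hnodup : l.Nodup) (hcomplete : ∀ v, v ∈ l)
    (happrox : RB G.Adj l ≤ MRB G.Adj + α) :
    VS G.Adj l ≤ MinVS G.Adj + α + 1 := by
  have hne : {k | ∃ l : List V, l.Nodup ∧ (∀ v, v ∈ l) ∧ VS G.Adj l = k}.Nonempty := by
    refine ⟨VS G.Adj Finset.univ.toList, Finset.univ.toList, Finset.nodup_toList _,
      fun v => by simp, rfl⟩
  obtain ⟨l₀, hn₀, hc₀, hv₀⟩ := Nat.sInf_mem hne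
  have h1 : MRB G.Adj ≤ RB G.Adj l₀ := Nat.sInf_le ⟨l₀, hn₀, hc₀, rfl⟩
  have h2 : RB G.Adj l₀ ≤ VS G.Adj l₀ + 1 := RB_le_VS_succ _ _
  have h3 : VS G.Adj l ≤ RB G.Adj l := VS_le_RB _ _
  have : MinVS G.Adj = VS G.Adj l₀ := hv₀.symm
  omega
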